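/- Let Ω/k be a field extension, X₁ an algebraic variety over Ω, X₂ an algebraic variety over k, and Ω̄ an algebraic closure of Ω. If X₂(k) is Zariski dense in X₂, then the set X₁(Ω̄) × X₂(k) is Zariski dense in the fiber product X₁ ×_Ω X₂,Ω (the base change of X₂ to Ω fibered with X₁). -/

import Mathlib

open scoped TensorProduct

/-!
STATEMENT 14: Let Ω/k be a field extension, X₁ an (affine) algebraic variety over Ω with
coordinate ring R₁, X₂ an (affine) algebraic variety over k with coordinate ring R₂, and
Ω̄ an algebraic closure of Ω.  If X₂(k) is Zariski dense in X₂, then X₁(Ω̄) × X₂(k) is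
Zariski dense in the fiber product X₁ ×_Ω X₂,Ω, whose coordinate ring is
R₁ ⊗_Ω (Ω ⊗_k R₂) ≅ R₁ ⊗_k R₂.
-/

noncomputable section

variable (k Ω Ωbar : Type) [Field k] [Field Ω] [Field Ωbar]
variable [Algebra k Ω] [Algebra Ω Ωbar] [Algebra k Ωbar] [IsScalarTower k Ω Ωbar]
variable (R₁ : Type) [CommRing R₁] [Algebra Ω R₁] [Algebra k R₁] [IsScalarTower k Ω R₁]
variable (R₂ : Type) [CommRing R₂] [Algebra k R₂]

/-- The point of the fiber product `X₁ ×_Ω X₂,Ω` obtained from an `Ω̄`-point `y` of `X₁`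
and a `k`-point `x` of `X₂`, as evaluation on the coordinate ring `R₁ ⊗[k] R₂`. -/
def prodPt (y : R₁ →ₐ[Ω] Ωbar) (x : R₂ →ₐ[k] k) : R₁ ⊗[k] R₂ →ₐ[k] Ωbar :=
  Algebra.TensorProduct.productMap (y.restrictScalars k)
    ((Algebra.ofId k Ωbar).comp x)

/-- Nullstellensatz: in a reduced finite type algebra over a field, any element
killed by all points valued in an algebraically closed extension is zero. -/
lemma aux_nullstellensatz [IsAlgClosed Ωbar]
    (hfg₁ : Algebra.FiniteType Ω R₁) [IsReduced R₁]
    (r : R₁) (h : ∀ y : R₁ →ₐ[Ω] Ωbar, y r = 0) : r = 0 := by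
  haveI : IsJacobsonRing R₁ := isJacobsonRing_of_finiteType (A := Ω)
  have hjac : (⊥ : Ideal R₁).jacobson = ⊥ := by
    have h1 : (⊥ : Ideal R₁).IsRadical := by
      rw [← Ideal.radical_eq_iff]
      exact nilradical_eq_zero R₁
    exact IsJacobsonRing.out ‹IsJacobsonRing R₁› h1
  by_contra hr
  have : r ∉ (⊥ : Ideal R₁).jacobson := by rw [hjac]; exact hr
  rw [Ideal.jacobson, Ideal.mem_sInf] at this
  push_neg at this
  obtain ⟨m, ⟨-, hm⟩, hrm⟩ := this
  haveI := hm
  letI : Field (R₁ ⧸ m) := Ideal.Quotient.field m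
  haveI : Algebra.FiniteType Ω (R₁ ⧸ m) :=
    Algebra.FiniteType.of_surjective (Ideal.Quotient.mkₐ Ω m)
      (Ideal.Quotient.mkₐ_surjective Ω m)
  haveI : Module.Finite Ω (R₁ ⧸ m) := finite_of_finite_type_of_isJacobsonRing Ω (R₁ ⧸ m)
  haveI : Algebra.IsAlgebraic Ω (R₁ ⧸ m) := Algebra.IsAlgebraic.of_finite Ω (R₁ ⧸ m)
  let y0 : (R₁ ⧸ m) →ₐ[Ω] Ωbar := IsAlgClosed.lift
  have := h (y0.comp (Ideal.Quotient.mkₐ Ω m))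
  simp only [AlgHom.comp_apply] at this
  have : (Ideal.Quotient.mkₐ Ω m) r = 0 := by
    exact (map_eq_zero_iff y0 (RingHom.injective y0.toRingHom)).mp this
  exact hrm (Ideal.Quotient.eq_zero_iff_mem.mp this)

theorem stmt14 [IsAlgClosed Ωbar]
    (hfg₁ : Algebra.FiniteType Ω R₁) [IsReduced R₁]
    (hfg₂ : Algebra.FiniteType k R₂)
    -- X₂(k) is Zariski dense in X₂.
    (hdense : ∀ I : Ideal R₂, (∀ x : R₂ →ₐ[k] k, ∀ f ∈ I, x f = 0) → I = ⊥) :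
    -- then X₁(Ω̄) × X₂(k) is Zariski dense in X₁ ×_Ω X₂,Ω.
    ∀ J : Ideal (R₁ ⊗[k] R₂),
      (∀ (y : R₁ →ₐ[Ω] Ωbar) (x : R₂ →ₐ[k] k), ∀ f ∈ J,
        prodPt k Ω Ωbar R₁ R₂ y x f = 0) → J = ⊥ := by
  intro J hJ
  classical
  -- the map `id ⊗ x : R₁ ⊗ R₂ → R₁` for a k-point x
  let gmap : (R₂ →ₐ[k] k) → (R₁ ⊗[k] R₂ →ₐ[k] R₁) := fun x =>
    Algebra.TensorProduct.productMap (AlgHom.id k R₁) ((Algebra.ofId k R₁).comp x)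
  -- coordinate maps w.r.t. a k-basis of R₁
  let b : Module.Basis (Module.Basis.ofVectorSpaceIndex k R₁) k R₁ := Module.Basis.ofVectorSpace k R₁
  let e : R₁ ⊗[k] R₂ ≃ₗ[k] (Module.Basis.ofVectorSpaceIndex k R₁ →₀ R₂) :=
    (TensorProduct.congr b.repr (LinearEquiv.refl k R₂)).trans
      (TensorProduct.finsuppScalarLeft k R₂ _)
  -- compatibility: the i-th coordinate of `gmap x f` is `x (e f i)`
  have key : ∀ (x : R₂ →ₐ[k] k) (f : R₁ ⊗[k] R₂) (i : Module.Basis.ofVectorSpaceIndex k R₁),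
      b.repr (gmap x f) i = x (e f i) := by
    intro x f i
    induction f using TensorProduct.induction_on with
    | zero => simp
    | tmul r s =>
        have h1 : gmap x (r ⊗ₜ s) = x s • r := by
          simp [gmap, Algebra.TensorProduct.productMap_apply_tmul, Algebra.ofId_apply,
            Algebra.smul_def, mul_comm]
        have h2 : e (r ⊗ₜ s) i = b.repr r i • s := by
          simp [e, TensorProduct.finsuppScalarLeft_apply_tmul_apply]
        rw [h1, h2, map_smul, map_smul]
        simp [Algebra.smul_def, mul_comm]
    | add f g hf hg =>
        simp only [map_add, Finsupp.add_apply, hf, hg]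
  -- for each x, `gmap x f` is killed by all Ω̄-points y of R₁
  have hgy : ∀ (x : R₂ →ₐ[k] k) (f : R₁ ⊗[k] R₂) (y : R₁ →ₐ[Ω] Ωbar),
      y (gmap x f) = prodPt k Ω Ωbar R₁ R₂ y x f := by
    intro x f y
    induction f using TensorProduct.induction_on with
    | zero => simp
    | tmul r s =>
        simp only [gmap, prodPt, Algebra.TensorProduct.productMap_apply_tmul,
          AlgHom.id_apply, AlgHom.comp_apply, AlgHom.coe_restrictScalars',
          Algebra.ofId_apply, map_mul]
        congr 1
        rw [IsScalarTower.algebraMap_apply k Ω R₁, y.commutes,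
          ← IsScalarTower.algebraMap_apply k Ω Ωbar]
    | add f g hf hg => simp only [map_add, hf, hg]
  rw [eq_bot_iff]
  intro f hf
  have hcoord : ∀ i, e f i = 0 := by
    intro i
    have hx : ∀ x : R₂ →ₐ[k] k, x (e f i) = 0 := by
      intro x
      have hzero : gmap x f = 0 :=
        aux_nullstellensatz (Ω := Ω) (Ωbar := Ωbar) (R₁ := R₁) hfg₁ _ fun y => by
          rw [hgy x f y]; exact hJ y x f hf
      rw [← key x f i, hzero, map_zero, Finsupp.coe_zero, Pi.zero_apply]
    have hI := hdense (Ideal.span {e f i}) ?_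
    · have hmem : e f i ∈ Ideal.span {e f i} := Ideal.subset_span rfl
      rw [hI] at hmem
      exact hmem
    · intro x g hg
      rw [Ideal.mem_span_singleton] at hg
      obtain ⟨t, rfl⟩ := hg
      rw [map_mul, hx x, zero_mul]
  have hef : e f = 0 := Finsupp.ext hcoord
  have : f = 0 := by
    have := congrArg e.symm hef
    simpa using this
  simpa [Ideal.mem_bot] using this
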